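/- A symmetric n×n matrix with all entries in {0, −1, 1} is positive semidefinite if and only if it equals T Tᵀ for some n×n matrix T whose entries all lie in {0, −1, 1}. -/

import Mathlib

open Matrix

private lemma psd_det_nonneg {m : Type*} [Fintype m] [DecidableEq m]
    {M : Matrix m m ℝ} (hM : M.PosSemidef) : 0 ≤ M.det := by
  rw [hM.isHermitian.det_eq_prod_eigenvalues]
  exact Finset.prod_nonneg fun i _ => hM.eigenvalues_nonneg i

theorem stmt_1 (n : ℕ) (X : Matrix (Fin n) (Fin n) ℝ)
    (hsymm : X.IsSymm)
    (hternary : ∀ i j, X i j = 0 ∨ X i j = -1 ∨ X i j = 1) :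
    X.PosSemidef ↔
      ∃ T : Matrix (Fin n) (Fin n) ℝ,
        (∀ i j, T i j = 0 ∨ T i j = -1 ∨ T i j = 1) ∧ X = T * Tᵀ := by
  classical
  constructor
  · intro hX
    have hsym' : ∀ i j, X j i = X i j := fun i j => by
      have := congrFun (congrFun hsymm j) i
      simpa using this.symm
    have hdiag : ∀ i, X i i = 0 ∨ X i i = 1 := by
      intro i
      have h0 : 0 ≤ X i i := by
        have := psd_det_nonneg (hX.submatrix (fun _ : Fin 1 => i))
        simpa [Matrix.det_fin_one] using this
      rcases hternary i i with h | h | h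
      · exact Or.inl h
      · exfalso; rw [h] at h0; linarith
      · exact Or.inr h
    have hzero : ∀ i j, X i i = 0 → X i j = 0 := by
      intro i j h
      have hd := psd_det_nonneg (hX.submatrix ![i, j])
      rw [Matrix.det_fin_two] at hd
      simp only [Matrix.submatrix_apply, Matrix.cons_val_zero, Matrix.cons_val_one,
        Matrix.head_cons] at hd
      rw [h, hsym' i j] at hd
      nlinarith [sq_nonneg (X i j)]
    have htrans : ∀ i j k, X i i = 1 → X j j = 1 → X k k = 1 →
        X i j ≠ 0 → X j k ≠ 0 → X i k = X i j * X j k := by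
      intro i j k hi hj hk hij hjk
      by_cases h1 : i = j
      · subst h1; rw [hi, one_mul]
      by_cases h2 : j = k
      · subst h2; rw [hj, mul_one]
      by_cases h3 : i = k
      · subst h3
        rw [hi, hsym' i j]
        rcases hternary i j with h | h | h
        · exact absurd h hij
        · rw [h]; norm_num
        · rw [h]; norm_num
      · have hd := psd_det_nonneg (hX.submatrix ![i, j, k])
        rw [Matrix.det_fin_three] at hd
        simp only [Matrix.submatrix_apply, Matrix.cons_val_zero, Matrix.cons_val_one,
          Matrix.head_cons, Matrix.cons_val_two, Matrix.tail_cons, Matrix.head_fin_const] at hd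
        rw [hi, hj, hk, hsym' i j, hsym' j k, hsym' i k] at hd
        rcases hternary i j with ha | ha | ha <;>
          rcases hternary j k with hb | hb | hb <;>
          rcases hternary i k with hc | hc | hc <;>
          simp_all <;> nlinarith
    -- representative map
    set S : Fin n → Finset (Fin n) := fun i => Finset.univ.filter fun j => X i j ≠ 0 with hS
    have hmemS : ∀ i j, j ∈ S i ↔ X i j ≠ 0 := by intro i j; simp [hS]
    have hSne : ∀ i, X i i = 1 → (S i).Nonempty := fun i h =>
      ⟨i, (hmemS i i).mpr (by rw [h]; norm_num)⟩
    set r : Fin n → Fin n := fun i => if h : (S i).Nonempty then (S i).min' h else i with hr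
    have hrmem : ∀ i, X i i = 1 → X i (r i) ≠ 0 := by
      intro i h
      have hne := hSne i h
      have := (S i).min'_mem hne
      rw [hmemS] at this
      simpa [hr, dif_pos hne] using this
    have hrdiag : ∀ i, X i i = 1 → X (r i) (r i) = 1 := by
      intro i h
      rcases hdiag (r i) with h0 | h1
      · exfalso
        apply hrmem i h
        rw [← hsym' i (r i)]
        exact hzero (r i) i h0
      · exact h1
    have hdiag1 : ∀ i j, X i j ≠ 0 → X j j = 1 := by
      intro i j hij
      rcases hdiag j with h0 | h1
      · exfalso
        apply hij
        rw [← hsym' i j]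
        exact hzero j i h0
      · exact h1
    have hSeq : ∀ i k, X i i = 1 → X k k = 1 → X i k ≠ 0 → S i = S k := by
      intro i k hi hk hik
      have hki : X k i ≠ 0 := by rw [hsym' i k]; exact hik
      ext j
      rw [hmemS, hmemS]
      constructor
      · intro hij
        have hj := hdiag1 i j hij
        rw [htrans k i j hk hi hj hki hij]
        exact mul_ne_zero hki hij
      · intro hkj
        have hj := hdiag1 k j hkj
        rw [htrans i k j hi hk hj hik hkj]
        exact mul_ne_zero hik hkj
    have hreq : ∀ i k, X i i = 1 → X k k = 1 → X i k ≠ 0 → r i = r k := by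
      intro i k hi hk hik
      have hS' := hSeq i k hi hk hik
      simp only [hr]
      rw [dif_pos (hSne i hi), dif_pos (hSne k hk)]
      congr 1
    refine ⟨fun i j => if X i i = 1 ∧ j = r i then X i j else 0, ?_, ?_⟩
    · intro i j
      dsimp only
      split
      · exact hternary i j
      · exact Or.inl rfl
    · ext i k
      erw [Matrix.mul_apply]
      show X i k = ∑ j, (if X i i = 1 ∧ j = r i then X i j else 0) *
        (if X k k = 1 ∧ j = r k then X k j else 0)
      by_cases hi : X i i = 1
      · by_cases hk : X k k = 1
        · by_cases hik : X i k = 0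
          · have hrne : r i ≠ r k := by
              intro hm
              have h1 : X i (r i) ≠ 0 := hrmem i hi
              have h2 : X (r i) k ≠ 0 := by
                rw [← hsym' (r i) k, hm]; exact hrmem k hk
              have h3 := htrans i (r i) k hi (hrdiag i hi) hk h1 h2
              exact mul_ne_zero h1 h2 (by rw [← h3]; exact hik)
            rw [hik]
            symm
            apply Finset.sum_eq_zero
            intro j _
            by_cases hji : j = r i
            · have : ¬(X k k = 1 ∧ j = r k) := by
                rintro ⟨-, hjk⟩; exact hrne (hji ▸ hjk ▸ rfl)
              rw [if_neg this, mul_zero]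
            · rw [if_neg (fun h => hji h.2), zero_mul]
          · have hm := hreq i k hi hk hik
            have hsum : ∀ j, (if X i i = 1 ∧ j = r i then X i j else 0) *
                (if X k k = 1 ∧ j = r k then X k j else 0) =
                if j = r i then X i j * X k j else 0 := by
              intro j
              by_cases hj : j = r i
              · rw [if_pos ⟨hi, hj⟩, if_pos ⟨hk, hm ▸ hj⟩, if_pos hj]
              · rw [if_neg (fun h => hj h.2), zero_mul, if_neg hj]
            rw [Finset.sum_congr rfl (fun j _ => hsum j), Finset.sum_ite_eq' Finset.univ (r i)
              (fun j => X i j * X k j), if_pos (Finset.mem_univ _)]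
            have h1 : X i (r i) ≠ 0 := hrmem i hi
            have h2 : X (r i) k ≠ 0 := by
              rw [← hsym' (r i) k, hm]; exact hrmem k hk
            rw [htrans i (r i) k hi (hrdiag i hi) hk h1 h2, ← hsym' (r i) k]
        · have hk0 : X k k = 0 := (hdiag k).resolve_right hk
          have : X i k = 0 := by rw [hsym' k i]; exact hzero k i hk0
          rw [this]
          symm
          apply Finset.sum_eq_zero
          intro j _
          rw [if_neg (show ¬(X k k = 1 ∧ j = r k) from fun h => hk h.1), mul_zero]
      · have hi0 : X i i = 0 := (hdiag i).resolve_right hi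
        rw [hzero i k hi0]
        symm
        apply Finset.sum_eq_zero
        intro j _
        rw [if_neg (show ¬(X i i = 1 ∧ j = r i) from fun h => hi h.1), zero_mul]
  · rintro ⟨T, -, rfl⟩
    have := Matrix.posSemidef_self_mul_conjTranspose T
    rwa [Matrix.conjTranspose_eq_transpose_of_trivial] at this
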